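/- (Theorem 2) Let G=(V,E) be a graph of convex sets with origin s and destination d, suppose there exists at least one path from s to d, let h be an admissible heuristic, and let S be a cut-set with d ∈ N_S and N_S∖{d} ≠ ∅. Then C_opt(s,d) ≥ min( R*_opt(S, N_S∖{d}), R*_opt(S, {d}) ). -/

import Mathlib

open scoped BigOperators Pointwise Classical

noncomputable section

/-- A graph of convex sets: a finite directed edge set together with a nonempty
compact convex set in `ℝ^n` attached to each vertex. -/
structure GCS (V : Type*) (n : ℕ) where
  E : Finset (V × V)
  X : V → Set (EuclideanSpace ℝ (Fin n))
  nonempty : ∀ v, (X v).Nonempty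
  compact : ∀ v, IsCompact (X v)
  convex : ∀ v, Convex ℝ (X v)

/-- The cost of a path of `k` vertices with chosen points `x 0, …, x (k-1)`. -/
def pathCost {n : ℕ} (k : ℕ) (x : ℕ → EuclideanSpace ℝ (Fin n)) : ℝ :=
  ∑ i ∈ Finset.range (k - 1), ‖x i - x (i + 1)‖

namespace GCS

variable {V : Type*} {n : ℕ}

/-- `(v 0, …, v (k-1))` is a path in `G` with chosen points `x i ∈ X (v i)`. -/
def IsPathOn (G : GCS V n) (k : ℕ) (v : ℕ → V) (x : ℕ → EuclideanSpace ℝ (Fin n)) : Prop :=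
  1 ≤ k ∧ (∀ i, i + 1 < k → (v i, v (i + 1)) ∈ G.E) ∧ ∀ i, i < k → x i ∈ G.X (v i)

/-- `C_opt(a,b)`: the infimum of path costs over all paths from `a` to `b`
and all choices of points (`⊤` if no such path exists). -/
def Copt (G : GCS V n) (a b : V) : EReal :=
  sInf {c : EReal | ∃ (k : ℕ) (v : ℕ → V) (x : ℕ → EuclideanSpace ℝ (Fin n)),
    G.IsPathOn k v x ∧ v 0 = a ∧ v (k - 1) = b ∧ c = ((pathCost k x : ℝ) : EReal)}

/-- A heuristic `h` is admissible for destination `d`. -/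
def Admissible (G : GCS V n) (d : V) (h : V → ℝ) : Prop :=
  h d = 0 ∧ ∀ v : V, (h v : EReal) ≤ G.Copt v d

/-- The neighborhood `N_S` of a set `S` of vertices. -/
def nbr [Fintype V] (G : GCS V n) (S : Finset V) : Finset V :=
  Finset.univ.filter fun v => v ∉ S ∧ ∃ u ∈ S, (u, v) ∈ G.E

/-- `C*_opt(S,S')`: the infimum over all paths starting at `s`, staying in `S` except
for the last vertex, and ending at a terminal vertex in `S'`, of the path cost plus the
heuristic value of the terminal vertex. -/
def CstarOpt (G : GCS V n) (h : V → ℝ) (s : V) (S S' : Finset V) : EReal :=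
  sInf {c : EReal | ∃ (k : ℕ) (v : ℕ → V) (x : ℕ → EuclideanSpace ℝ (Fin n)),
    G.IsPathOn k v x ∧ v 0 = s ∧ (∀ i, i < k - 1 → v i ∈ S) ∧ v (k - 1) ∈ S' ∧
    c = ((pathCost k x + h (v (k - 1)) : ℝ) : EReal)}

/-- The edge set `Ē` of the subgraph used by SPP*-GCS: edges leaving `S` into `S ∪ S'`. -/
def Ebar (G : GCS V n) (S S' : Finset V) : Finset (V × V) :=
  G.E.filter fun e => e.1 ∈ S ∧ e.2 ∈ S ∪ S'

end GCS

/-- The perspective `X̄ = {(x, λ) : λ ≥ 0, x ∈ λX}` of a set `X ⊆ ℝ^n`. -/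
def persp {n : ℕ} (X : Set (EuclideanSpace ℝ (Fin n))) :
    Set (EuclideanSpace ℝ (Fin n) × ℝ) :=
  {p | 0 ≤ p.2 ∧ p.1 ∈ p.2 • X}

namespace GCS

variable {V : Type*} {n : ℕ}

/-- Feasibility for the convex relaxation of SPP*-GCS on `(S, S')`. -/
def RelaxFeasible (G : GCS V n) (s : V) (S S' : Finset V)
    (y : V × V → ℝ) (α : V → ℝ) (z z' : V × V → EuclideanSpace ℝ (Fin n)) : Prop :=
  (∀ e ∈ G.Ebar S S', y e ∈ Set.Icc (0 : ℝ) 1) ∧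
  (∀ v ∈ S', α v ∈ Set.Icc (0 : ℝ) 1) ∧
  (∑ v ∈ S', α v) = 1 ∧
  (∑ e ∈ (G.Ebar S S').filter fun e => e.1 = s, y e) = 1 ∧
  (∀ v ∈ S', (∑ e ∈ (G.Ebar S S').filter fun e => e.2 = v, y e) = α v) ∧
  (∀ v ∈ S, v ≠ s →
    (∑ e ∈ (G.Ebar S S').filter fun e => e.2 = v, z' e)
      = (∑ e ∈ (G.Ebar S S').filter fun e => e.1 = v, z e) ∧
    (∑ e ∈ (G.Ebar S S').filter fun e => e.2 = v, y e)
      = (∑ e ∈ (G.Ebar S S').filter fun e => e.1 = v, y e)) ∧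
  (∀ e ∈ G.Ebar S S', (z e, y e) ∈ persp (G.X e.1) ∧ (z' e, y e) ∈ persp (G.X e.2))

/-- The objective of the convex relaxation of SPP*-GCS. -/
def relaxObj (G : GCS V n) (h : V → ℝ) (S S' : Finset V)
    (y : V × V → ℝ) (α : V → ℝ) (z z' : V × V → EuclideanSpace ℝ (Fin n)) : ℝ :=
  (∑ e ∈ G.Ebar S S', ‖z e - z' e‖) + ∑ v ∈ S', α v * h v

/-- `R*_opt(S,S')`: the optimal value of the convex relaxation of SPP*-GCS. -/
def RstarOpt (G : GCS V n) (h : V → ℝ) (s : V) (S S' : Finset V) : EReal :=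
  sInf {c : EReal | ∃ y α z z', G.RelaxFeasible s S S' y α z z' ∧
    c = ((G.relaxObj h S S' y α z z' : ℝ) : EReal)}

/-- The optimal value of the MICP for SPP*-GCS (the relaxation with binary `y` and `α`). -/
def MICPval (G : GCS V n) (h : V → ℝ) (s : V) (S S' : Finset V) : EReal :=
  sInf {c : EReal | ∃ y α z z', G.RelaxFeasible s S S' y α z z' ∧
    (∀ e ∈ G.Ebar S S', y e = 0 ∨ y e = 1) ∧
    (∀ v ∈ S', α v = 0 ∨ α v = 1) ∧
    c = ((G.relaxObj h S S' y α z z' : ℝ) : EReal)}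

end GCS

end


private lemma chain_norm_le {n : ℕ} (q : ℕ → EuclideanSpace ℝ (Fin n)) (a b : ℕ) (hab : a ≤ b) :
    ‖q a - q b‖ ≤ ∑ i ∈ Finset.Ico a b, ‖q i - q (i+1)‖ := by
  have h := dist_le_range_sum_dist (fun i => q (a + i)) (b - a)
  have hb : a + (b - a) = b := by omega
  rw [hb] at h
  rw [Finset.sum_Ico_eq_sum_range]
  simp only [dist_eq_norm] at h
  refine le_trans h (le_of_eq (Finset.sum_congr rfl fun i _ => ?_))
  have : a + i + 1 = a + (i + 1) := by omega
  rw [this]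

private lemma eval_sum_ite {β : Type*} [AddCommMonoid β] {ι : Type*} [DecidableEq ι] {m : ℕ}
    (ed : ℕ → ι) (edinj : ∀ i < m, ∀ j < m, ed i = ed j → i = j) (f : ℕ → β) :
    ∀ j < m, (∑ i ∈ Finset.range m, if ed j = ed i then f i else 0) = f j := by
  intro j hj
  rw [Finset.sum_eq_single j]
  · rw [if_pos rfl]
  · intro i hi hij
    rw [if_neg]
    intro hh
    exact hij (edinj i (Finset.mem_range.mp hi) j hj hh.symm)
  · intro hjm; exact absurd (Finset.mem_range.mpr hj) hjm

private lemma eval_sum_ite_zero {β : Type*} [AddCommMonoid β] {ι : Type*} [DecidableEq ι] {m : ℕ}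
    (ed : ℕ → ι) (e : ι) (he : ∀ i < m, e ≠ ed i) (f : ℕ → β) :
    (∑ i ∈ Finset.range m, if e = ed i then f i else 0) = 0 :=
  Finset.sum_eq_zero fun i hi => if_neg (he i (Finset.mem_range.mp hi))

private lemma swap_sum {β : Type*} [AddCommMonoid β] {ι : Type*} [DecidableEq ι] (F : Finset ι)
    (m : ℕ) (ed : ℕ → ι) (g : ℕ → β) :
    (∑ e ∈ F, ∑ i ∈ Finset.range m, if e = ed i then g i else 0)
      = ∑ i ∈ Finset.range m, if ed i ∈ F then g i else 0 := by
  rw [Finset.sum_comm]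
  exact Finset.sum_congr rfl fun i _ => Finset.sum_ite_eq' F (ed i) (fun _ => g i)

private lemma swap_sum_filter {β : Type*} [AddCommMonoid β] {ι : Type*} [DecidableEq ι]
    (Eb : Finset ι) (p : ι → Prop) [DecidablePred p] (m : ℕ) (ed : ℕ → ι)
    (hmem : ∀ i < m, ed i ∈ Eb) (g : ℕ → β) :
    (∑ e ∈ Eb.filter p, ∑ i ∈ Finset.range m, if e = ed i then g i else 0)
      = ∑ i ∈ Finset.range m, if p (ed i) then g i else 0 := by
  rw [swap_sum]
  refine Finset.sum_congr rfl fun i hi => ?_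
  have hiff : ed i ∈ Eb.filter p ↔ p (ed i) := by
    simp [Finset.mem_filter, hmem i (Finset.mem_range.mp hi)]
  by_cases hp : p (ed i)
  · rw [if_pos (hiff.mpr hp), if_pos hp]
  · rw [if_neg (fun hc => hp (hiff.mp hc)), if_neg hp]
private lemma gcs_simplify {V : Type*} {n : ℕ} (G : GCS V n) (S : Finset V) (t : V) (ht : t ∉ S) :
    ∀ (j : ℕ) (w : ℕ → V) (q : ℕ → EuclideanSpace ℝ (Fin n)),
      (∀ i < j, (w i, w (i+1)) ∈ G.E) → (∀ i ≤ j, q i ∈ G.X (w i)) →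
      (∀ i < j, w i ∈ S) → w j = t →
      ∃ (m : ℕ) (w' : ℕ → V) (q' : ℕ → EuclideanSpace ℝ (Fin n)),
        (∀ i < m, (w' i, w' (i+1)) ∈ G.E) ∧ (∀ i ≤ m, q' i ∈ G.X (w' i)) ∧
        (∀ i < m, w' i ∈ S) ∧ w' 0 = w 0 ∧ w' m = t ∧
        (∀ a ≤ m, ∀ b ≤ m, w' a = w' b → a = b) ∧
        ∑ i ∈ Finset.range m, ‖q' i - q' (i+1)‖ ≤ ∑ i ∈ Finset.range j, ‖q i - q (i+1)‖ := by
  intro j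
  induction j using Nat.strong_induction_on with
  | _ j IH =>
  intro w q hE hX hS hjt
  by_cases hinj : ∀ a ≤ j, ∀ b ≤ j, w a = w b → a = b
  · exact ⟨j, w, q, hE, hX, hS, rfl, hjt, hinj, le_refl _⟩
  · push_neg at hinj
    obtain ⟨a0, ha0, b0, hb0, hw0, hne0⟩ := hinj
    set A := min a0 b0 with hA
    set B := max a0 b0 with hB
    have hAB : A < B := by
      rcases Nat.lt_or_ge a0 b0 with hlt | hge
      · simp [hA, hB, Nat.min_eq_left hlt.le, Nat.max_eq_right hlt.le, hlt]
      · have : b0 < a0 := lt_of_le_of_ne hge (fun hh => hne0 hh.symm)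
        simp [hA, hB, Nat.min_eq_right this.le, Nat.max_eq_left this.le, this]
    have hBj : B ≤ j := by omega
    have hwAB : w A = w B := by
      rcases Nat.le_total a0 b0 with hle | hle
      · rw [hA, hB, Nat.min_eq_left hle, Nat.max_eq_right hle]; exact hw0
      · rw [hA, hB, Nat.min_eq_right hle, Nat.max_eq_left hle]; exact hw0.symm
    have hBj' : B < j := by
      rcases Nat.lt_or_ge B j with hh | hh
      · exact hh
      · exfalso
        have hBj2 : B = j := le_antisymm hBj hh
        have hAS : w A ∈ S := hS A (by omega)
        rw [hwAB, hBj2, hjt] at hAS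
        exact ht hAS
    set c := B - A with hc
    set j' := j - c with hj'
    have hc1 : 1 ≤ c := by omega
    have hj'lt : j' < j := by omega
    have hAj' : A + 1 ≤ j' := by omega
    set w₂ : ℕ → V := fun i => if i ≤ A then w i else w (i + c) with hw₂
    set q₂ : ℕ → EuclideanSpace ℝ (Fin n) := fun i => if i ≤ A then q i else q (i + c) with hq₂
    have hE₂ : ∀ i < j', (w₂ i, w₂ (i+1)) ∈ G.E := by
      intro i hi
      simp only [hw₂]
      rcases Nat.lt_trichotomy i A with h1 | h1 | h1
      · rw [if_pos (by omega : i ≤ A), if_pos (by omega : i + 1 ≤ A)]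
        exact hE i (by omega)
      · rw [if_pos (by omega : i ≤ A), if_neg (by omega)]
        have e2 : i + 1 + c = B + 1 := by omega
        rw [e2, h1, hwAB]
        exact hE B (by omega)
      · rw [if_neg (by omega), if_neg (by omega)]
        have : i + 1 + c = (i + c) + 1 := by omega
        rw [this]
        exact hE (i + c) (by omega)
    have hX₂ : ∀ i ≤ j', q₂ i ∈ G.X (w₂ i) := by
      intro i hi
      simp only [hw₂, hq₂]
      by_cases h1 : i ≤ A
      · rw [if_pos h1, if_pos h1]; exact hX i (by omega)
      · rw [if_neg h1, if_neg h1]; exact hX (i + c) (by omega)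
    have hS₂ : ∀ i < j', w₂ i ∈ S := by
      intro i hi
      simp only [hw₂]
      by_cases h1 : i ≤ A
      · rw [if_pos h1]; exact hS i (by omega)
      · rw [if_neg h1]; exact hS (i + c) (by omega)
    have hend₂ : w₂ j' = t := by
      simp only [hw₂]
      rw [if_neg (by omega)]
      have : j' + c = j := by omega
      rw [this, hjt]
    have hstart₂ : w₂ 0 = w 0 := by simp [hw₂]
    have hcost₂ : ∑ i ∈ Finset.range j', ‖q₂ i - q₂ (i+1)‖
        ≤ ∑ i ∈ Finset.range j, ‖q i - q (i+1)‖ := by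
      have h1 : ∀ i < A, ‖q₂ i - q₂ (i+1)‖ = ‖q i - q (i+1)‖ := by
        intro i hi
        simp only [hq₂]
        rw [if_pos (by omega : i ≤ A), if_pos (by omega : i + 1 ≤ A)]
      have h2 : ‖q₂ A - q₂ (A+1)‖ = ‖q A - q (B+1)‖ := by
        simp only [hq₂]
        rw [if_pos (le_refl _), if_neg (by omega)]
        have : A + 1 + c = B + 1 := by omega
        rw [this]
      have h3 : ∀ i, A < i → ‖q₂ i - q₂ (i+1)‖ = ‖q (i+c) - q ((i+c)+1)‖ := by
        intro i hi
        simp only [hq₂]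
        rw [if_neg (by omega), if_neg (by omega)]
        have : i + 1 + c = (i + c) + 1 := by omega
        rw [this]
      -- decompose LHS
      rw [Finset.range_eq_Ico, ← Finset.sum_Ico_consecutive _ (Nat.zero_le (A+1)) hAj']
      have hL1 : ∑ i ∈ Finset.Ico 0 (A+1), ‖q₂ i - q₂ (i+1)‖
          = (∑ i ∈ Finset.Ico 0 A, ‖q i - q (i+1)‖) + ‖q A - q (B+1)‖ := by
        rw [Finset.sum_Ico_succ_top (Nat.zero_le A), h2]
        congr 1
        refine Finset.sum_congr rfl fun i hi => ?_
        exact h1 i (Finset.mem_Ico.mp hi).2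
      have hL2 : ∑ i ∈ Finset.Ico (A+1) j', ‖q₂ i - q₂ (i+1)‖
          = ∑ i ∈ Finset.Ico (B+1) j, ‖q i - q (i+1)‖ := by
        rw [Finset.sum_Ico_eq_sum_range, Finset.sum_Ico_eq_sum_range]
        have hcard : j' - (A+1) = j - (B+1) := by omega
        rw [hcard]
        refine Finset.sum_congr rfl fun i _ => ?_
        rw [h3 (A+1+i) (by omega)]
        have e1 : A + 1 + i + c = B + 1 + i := by omega
        rw [e1]
      rw [hL1, hL2]
      -- decompose RHS
      rw [Finset.range_eq_Ico]
      rw [← Finset.sum_Ico_consecutive (fun i => ‖q i - q (i+1)‖) (Nat.zero_le (B+1)) (by omega : B+1 ≤ j),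
        ← Finset.sum_Ico_consecutive (fun i => ‖q i - q (i+1)‖) (Nat.zero_le A) (by omega : A ≤ B+1)]
      have htri : ‖q A - q (B+1)‖ ≤ ∑ i ∈ Finset.Ico A (B+1), ‖q i - q (i+1)‖ :=
        chain_norm_le q A (B+1) (by omega)
      linarith
    obtain ⟨m, w', q', hE', hX', hS', hst', hen', hinj', hc'⟩ :=
      IH j' hj'lt w₂ q₂ hE₂ hX₂ hS₂ hend₂
    exact ⟨m, w', q', hE', hX', hS', hst'.trans hstart₂, hen', hinj', hc'.trans hcost₂⟩
private lemma flow_balance {β : Type*} [AddCommMonoid β] {V : Type*} [DecidableEq V] (w : ℕ → V) (m : ℕ)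
    (winj : ∀ a ≤ m, ∀ b ≤ m, w a = w b → a = b) (v : V)
    (hvm : w m ≠ v) (hv0 : w 0 ≠ v) (g : ℕ → β) :
    (∑ i ∈ Finset.range m, if w (i+1) = v then g (i+1) else 0)
      = ∑ i ∈ Finset.range m, if w i = v then g i else 0 := by
  by_cases hp : ∃ p, p ≤ m ∧ w p = v
  · obtain ⟨p, hpm, hpv⟩ := hp
    have hplt : p < m := lt_of_le_of_ne hpm (by rintro rfl; exact hvm hpv)
    have hp0 : 0 < p := Nat.pos_of_ne_zero (by rintro rfl; exact hv0 hpv)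
    have hL : (∑ i ∈ Finset.range m, if w (i+1) = v then g (i+1) else 0) = g p := by
      rw [Finset.sum_eq_single_of_mem (p-1) (Finset.mem_range.mpr (by omega))]
      · have hip : p - 1 + 1 = p := by omega
        rw [if_pos (by rw [hip]; exact hpv), hip]
      · intro b hb hbne
        refine if_neg fun hc => hbne ?_
        have hbm := Finset.mem_range.mp hb
        have : b + 1 = p := winj (b+1) (by omega) p hpm (hc.trans hpv.symm)
        omega
    have hR : (∑ i ∈ Finset.range m, if w i = v then g i else 0) = g p := by
      rw [Finset.sum_eq_single_of_mem p (Finset.mem_range.mpr hplt)]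
      · rw [if_pos hpv]
      · intro b hb hbne
        refine if_neg fun hc => hbne ?_
        have hbm := Finset.mem_range.mp hb
        exact winj b (by omega) p hpm (hc.trans hpv.symm)
    rw [hL, hR]
  · push_neg at hp
    have h1 : (∑ i ∈ Finset.range m, if w (i+1) = v then g (i+1) else 0) = 0 :=
      Finset.sum_eq_zero fun i hi =>
        if_neg (hp (i+1) (by have := Finset.mem_range.mp hi; omega))
    have h2 : (∑ i ∈ Finset.range m, if w i = v then g i else 0) = 0 :=
      Finset.sum_eq_zero fun i hi =>
        if_neg (hp i (by have := Finset.mem_range.mp hi; omega))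
    rw [h1, h2]

private lemma relax_le {V : Type*} {n : ℕ} (G : GCS V n) (h : V → ℝ) (s : V) (S S' : Finset V)
    (hdisj : ∀ v ∈ S', v ∉ S) (m : ℕ) (hm : 1 ≤ m)
    (w : ℕ → V) (q : ℕ → EuclideanSpace ℝ (Fin n))
    (hE : ∀ i < m, (w i, w (i+1)) ∈ G.E) (hX : ∀ i ≤ m, q i ∈ G.X (w i))
    (hSmem : ∀ i < m, w i ∈ S) (hw0 : w 0 = s) (hterm : w m ∈ S')
    (winj : ∀ a ≤ m, ∀ b ≤ m, w a = w b → a = b) :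
    G.RstarOpt h s S S' ≤ ((∑ i ∈ Finset.range m, ‖q i - q (i+1)‖ + h (w m) : ℝ) : EReal) := by
  set ed : ℕ → V × V := fun i => (w i, w (i+1)) with heddef
  have edinj : ∀ i < m, ∀ jj < m, ed i = ed jj → i = jj := fun i hi jj hj hij =>
    winj i hi.le jj hj.le (congrArg Prod.fst hij)
  have edmem : ∀ i < m, ed i ∈ G.Ebar S S' := by
    intro i hi
    refine Finset.mem_filter.mpr ⟨hE i hi, hSmem i hi, ?_⟩
    rcases Nat.lt_or_ge (i+1) m with h1 | h1
    · exact Finset.mem_union_left _ (hSmem _ h1)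
    · have hi1 : i + 1 = m := by omega
      show (ed i).2 ∈ S ∪ S'
      have : (ed i).2 = w m := by rw [heddef]; show w (i+1) = w m; rw [hi1]
      rw [this]
      exact Finset.mem_union_right _ hterm
  set y : V × V → ℝ := fun e => ∑ i ∈ Finset.range m, if e = ed i then (1:ℝ) else 0 with hy
  set z : V × V → EuclideanSpace ℝ (Fin n) :=
    fun e => ∑ i ∈ Finset.range m, if e = ed i then q i else 0 with hz
  set z' : V × V → EuclideanSpace ℝ (Fin n) :=
    fun e => ∑ i ∈ Finset.range m, if e = ed i then q (i+1) else 0 with hz'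
  set α : V → ℝ := fun v => if v = w m then (1:ℝ) else 0 with hα
  have hyval : ∀ i < m, y (ed i) = 1 := fun i hi => by
    rw [hy]; exact eval_sum_ite ed edinj (fun _ => 1) i hi
  have hzval : ∀ i < m, z (ed i) = q i := fun i hi => by
    rw [hz]; exact eval_sum_ite ed edinj q i hi
  have hz'val : ∀ i < m, z' (ed i) = q (i+1) := fun i hi => by
    rw [hz']; exact eval_sum_ite ed edinj (fun i => q (i+1)) i hi
  have hy0 : ∀ e, (∀ i < m, e ≠ ed i) → y e = 0 := fun e he => by
    rw [hy]; exact eval_sum_ite_zero ed e he (fun _ => 1)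
  have hz0 : ∀ e, (∀ i < m, e ≠ ed i) → z e = 0 := fun e he => by
    rw [hz]; exact eval_sum_ite_zero ed e he q
  have hz'0 : ∀ e, (∀ i < m, e ≠ ed i) → z' e = 0 := fun e he => by
    rw [hz']; exact eval_sum_ite_zero ed e he (fun i => q (i+1))
  have hfeas : G.RelaxFeasible s S S' y α z z' := by
    refine ⟨?_, ?_, ?_, ?_, ?_, ?_, ?_⟩
    · -- y ∈ [0,1]
      intro e _
      by_cases he : ∃ i, i < m ∧ e = ed i
      · obtain ⟨i, hi, rfl⟩ := he
        rw [hyval i hi]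
        exact Set.mem_Icc.mpr ⟨zero_le_one, le_refl 1⟩
      · push_neg at he
        rw [hy0 e he]
        exact Set.mem_Icc.mpr ⟨le_refl 0, zero_le_one⟩
    · -- α ∈ [0,1]
      intro v _
      simp only [hα]
      split_ifs
      · exact Set.mem_Icc.mpr ⟨zero_le_one, le_refl 1⟩
      · exact Set.mem_Icc.mpr ⟨le_refl 0, zero_le_one⟩
    · -- ∑ α = 1
      simp only [hα]
      rw [Finset.sum_eq_single_of_mem (w m) hterm (fun b _ hb => if_neg hb), if_pos rfl]
    · -- source constraint
      simp only [hy]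
      rw [swap_sum_filter _ _ m ed edmem (fun _ => (1:ℝ))]
      simp only [heddef]
      rw [Finset.sum_eq_single_of_mem 0 (Finset.mem_range.mpr hm)]
      · exact if_pos hw0
      · intro b hb hbne
        refine if_neg fun hc => hbne ?_
        exact winj b (Finset.mem_range.mp hb).le 0 (Nat.zero_le m)
          ((show w b = s from hc).trans hw0.symm)
    · -- terminal constraint
      intro v hv
      simp only [hy, hα]
      rw [swap_sum_filter _ _ m ed edmem (fun _ => (1:ℝ))]
      simp only [heddef]
      by_cases hvt : v = w m
      · rw [if_pos hvt]
        rw [Finset.sum_eq_single_of_mem (m-1) (Finset.mem_range.mpr (by omega))]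
        · refine if_pos ?_
          show w (m-1+1) = v
          have : m - 1 + 1 = m := by omega
          rw [this, hvt]
        · intro b hb hbne
          refine if_neg fun hc => hbne ?_
          have hbm := Finset.mem_range.mp hb
          have : b + 1 = m := winj (b+1) (by omega) m (le_refl m)
            ((show w (b+1) = v from hc).trans (hvt ▸ rfl))
          omega
      · rw [if_neg hvt]
        refine Finset.sum_eq_zero fun i hi => if_neg fun hc => ?_
        have him := Finset.mem_range.mp hi
        have hwc : w (i+1) = v := hc
        rcases Nat.lt_or_ge (i+1) m with h1 | h1
        · exact (hdisj v hv) (hwc ▸ hSmem (i+1) h1)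
        · have : i + 1 = m := by omega
          exact hvt (hwc.symm.trans (by rw [this]))
    · -- flow conservation
      intro v hvS hvs
      have hvm : w m ≠ v := fun hc => (hdisj (w m) hterm) (hc ▸ hvS)
      have hv0 : w 0 ≠ v := fun hc => hvs (hc.symm.trans hw0)
      constructor
      · simp only [hz, hz']
        rw [swap_sum_filter _ _ m ed edmem (fun i => q (i+1)),
            swap_sum_filter _ _ m ed edmem q]
        simp only [heddef]
        exact flow_balance w m winj v hvm hv0 q
      · simp only [hy]
        rw [swap_sum_filter _ _ m ed edmem (fun _ => (1:ℝ)),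
            swap_sum_filter _ _ m ed edmem (fun _ => (1:ℝ))]
        simp only [heddef]
        exact flow_balance w m winj v hvm hv0 (fun _ => (1:ℝ))
    · -- perspective constraints
      intro e _
      by_cases he : ∃ i, i < m ∧ e = ed i
      · obtain ⟨i, hi, rfl⟩ := he
        constructor
        · refine ⟨?_, ?_⟩
          · rw [hyval i hi]; exact zero_le_one
          · show z (ed i) ∈ y (ed i) • G.X (ed i).1
            rw [hyval i hi, hzval i hi, one_smul]
            exact hX i hi.le
        · refine ⟨?_, ?_⟩
          · rw [hyval i hi]; exact zero_le_one
          · show z' (ed i) ∈ y (ed i) • G.X (ed i).2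
            rw [hyval i hi, hz'val i hi, one_smul]
            exact hX (i+1) (by omega)
      · push_neg at he
        constructor
        · refine ⟨?_, ?_⟩
          · rw [hy0 e he]
          · show z e ∈ y e • G.X e.1
            rw [hy0 e he, hz0 e he, Set.zero_smul_set (G.nonempty _)]
            rfl
        · refine ⟨?_, ?_⟩
          · rw [hy0 e he]
          · show z' e ∈ y e • G.X e.2
            rw [hy0 e he, hz'0 e he, Set.zero_smul_set (G.nonempty _)]
            rfl
  have hobj : G.relaxObj h S S' y α z z'
      = (∑ i ∈ Finset.range m, ‖q i - q (i+1)‖) + h (w m) := by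
    unfold GCS.relaxObj
    congr 1
    · have hnorm : ∀ e, ‖z e - z' e‖
          = ∑ i ∈ Finset.range m, if e = ed i then ‖q i - q (i+1)‖ else 0 := by
        intro e
        by_cases he : ∃ i, i < m ∧ e = ed i
        · obtain ⟨i, hi, rfl⟩ := he
          rw [hzval i hi, hz'val i hi,
            eval_sum_ite ed edinj (fun i => ‖q i - q (i+1)‖) i hi]
        · push_neg at he
          rw [hz0 e he, hz'0 e he, sub_zero, norm_zero,
            eval_sum_ite_zero ed e he (fun i => ‖q i - q (i+1)‖)]
      calc ∑ e ∈ G.Ebar S S', ‖z e - z' e‖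
          = ∑ e ∈ G.Ebar S S', ∑ i ∈ Finset.range m,
              if e = ed i then ‖q i - q (i+1)‖ else 0 :=
            Finset.sum_congr rfl fun e _ => hnorm e
        _ = ∑ i ∈ Finset.range m,
              if ed i ∈ G.Ebar S S' then ‖q i - q (i+1)‖ else 0 :=
            swap_sum _ m ed _
        _ = ∑ i ∈ Finset.range m, ‖q i - q (i+1)‖ :=
            Finset.sum_congr rfl fun i hi => if_pos (edmem i (Finset.mem_range.mp hi))
    · simp only [hα, ite_mul, one_mul, zero_mul]
      rw [Finset.sum_eq_single_of_mem (w m) hterm (fun b _ hb => if_neg hb), if_pos rfl]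
  refine sInf_le ⟨y, α, z, z', hfeas, ?_⟩
  rw [hobj]
/-- Theorem 2: For a cut-set `S` with `d ∈ N_S` and `N_S \ {d} ≠ ∅`,
`C_opt(s,d) ≥ min(R*_opt(S, N_S \ {d}), R*_opt(S, {d}))`. -/
theorem stmt7 {V : Type*} [Fintype V] {n : ℕ} (G : GCS V n) (s d : V) (h : V → ℝ)
    (hadm : G.Admissible d h)
    (hpath : ∃ (k : ℕ) (v : ℕ → V) (x : ℕ → EuclideanSpace ℝ (Fin n)),
      G.IsPathOn k v x ∧ v 0 = s ∧ v (k - 1) = d)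
    (S : Finset V) (hs : s ∈ S) (hd : d ∉ S)
    (hdN : d ∈ G.nbr S) (hne : (G.nbr S \ {d}).Nonempty) :
    min (G.RstarOpt h s S (G.nbr S \ {d})) (G.RstarOpt h s S {d}) ≤ G.Copt s d := by
  classical
  refine le_sInf ?_
  rintro c ⟨k, v, x, ⟨hk1, hEp, hXp⟩, hv0, hvk, rfl⟩
  -- the first index at which the path leaves S
  have hex : ∃ i, v i ∉ S := ⟨k - 1, hvk ▸ hd⟩
  set j := Nat.find hex with hjdef
  have hj : v j ∉ S := Nat.find_spec hex
  have hmin : ∀ i < j, v i ∈ S := fun i hi => by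
    by_contra hc
    exact (Nat.find_min hex hi) hc
  have hjk1 : j ≤ k - 1 := Nat.find_le (hvk ▸ hd)
  have hj1 : 1 ≤ j := by
    rcases Nat.eq_zero_or_pos j with h0 | h0
    · exact absurd (h0 ▸ hj) (not_not.mpr (hv0 ▸ hs))
    · exact h0
  have hjk : j < k := by omega
  -- simplify the prefix path
  obtain ⟨m, w, qq, hE', hX', hS', hst, hen, hinj, hcost⟩ :=
    gcs_simplify G S (v j) hj j v x
      (fun i hi => hEp i (by omega)) (fun i hi => hXp i (by omega)) hmin rfl
  have hm1 : 1 ≤ m := by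
    rcases Nat.eq_zero_or_pos m with h0 | h0
    · exfalso
      rw [h0] at hen
      rw [hst, hv0] at hen
      exact hj (hen ▸ hs)
    · exact h0
  -- heuristic bound via the suffix path
  have hCopt : G.Copt (v j) d
      ≤ ((pathCost (k - j) (fun i => x (j + i)) : ℝ) : EReal) := by
    refine sInf_le ⟨k - j, fun i => v (j + i), fun i => x (j + i),
      ⟨by omega, fun i hi => hEp (j + i) (by omega), fun i hi => hXp (j + i) (by omega)⟩,
      rfl, ?_, rfl⟩
    show v (j + (k - j - 1)) = d
    have : j + (k - j - 1) = k - 1 := by omega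
    rw [this, hvk]
  have hsuffix : pathCost (k - j) (fun i => x (j + i))
      = ∑ i ∈ Finset.range (k - 1 - j), ‖x (j + i) - x (j + i + 1)‖ := by
    unfold pathCost
    have hkj : k - j - 1 = k - 1 - j := by omega
    rw [hkj]
    exact Finset.sum_congr rfl fun i _ => rfl
  have hheur : h (v j) ≤ ∑ i ∈ Finset.range (k - 1 - j), ‖x (j + i) - x (j + i + 1)‖ := by
    have := (hadm.2 (v j)).trans hCopt
    rw [hsuffix] at this
    exact EReal.coe_le_coe_iff.mp this
  have hsplit : (∑ i ∈ Finset.range (k - 1), ‖x i - x (i + 1)‖)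
      = (∑ i ∈ Finset.range j, ‖x i - x (i + 1)‖)
        + ∑ i ∈ Finset.range (k - 1 - j), ‖x (j + i) - x (j + i + 1)‖ := by
    calc (∑ i ∈ Finset.range (k - 1), ‖x i - x (i + 1)‖)
        = ∑ i ∈ Finset.Ico 0 (k - 1), ‖x i - x (i + 1)‖ := by rw [Finset.range_eq_Ico]
      _ = (∑ i ∈ Finset.Ico 0 j, ‖x i - x (i + 1)‖)
            + ∑ i ∈ Finset.Ico j (k - 1), ‖x i - x (i + 1)‖ :=
          (Finset.sum_Ico_consecutive _ (Nat.zero_le j) (by omega)).symm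
      _ = (∑ i ∈ Finset.range j, ‖x i - x (i + 1)‖)
            + ∑ i ∈ Finset.range (k - 1 - j), ‖x (j + i) - x (j + i + 1)‖ := by
          rw [← Finset.range_eq_Ico, Finset.sum_Ico_eq_sum_range]
  have hfinal : (∑ i ∈ Finset.range m, ‖qq i - qq (i + 1)‖) + h (v j) ≤ pathCost k x := by
    unfold pathCost
    rw [hsplit]
    linarith [hcost, hheur]
  have hws : w 0 = s := hst.trans hv0
  by_cases htd : v j = d
  · -- terminal vertex is d : use the relaxation on (S, {d})
    have hdisj : ∀ u ∈ ({d} : Finset V), u ∉ S := fun u hu => by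
      rw [Finset.mem_singleton.mp hu]; exact hd
    have hterm : w m ∈ ({d} : Finset V) := Finset.mem_singleton.mpr (hen.trans htd)
    have hR := relax_le G h s S {d} hdisj m hm1 w qq hE' hX' hS' hws hterm hinj
    rw [hen] at hR
    refine le_trans (min_le_right _ _) (le_trans hR ?_)
    exact EReal.coe_le_coe_iff.mpr hfinal
  · -- terminal vertex in N_S \ {d}
    have hterm : w m ∈ G.nbr S \ {d} := by
      rw [hen]
      refine Finset.mem_sdiff.mpr ⟨?_, fun hc => htd (Finset.mem_singleton.mp hc)⟩
      refine Finset.mem_filter.mpr ⟨Finset.mem_univ _, hj, ⟨w (m - 1), hS' (m - 1) (by omega), ?_⟩⟩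
      have hedge := hE' (m - 1) (by omega)
      have hm' : m - 1 + 1 = m := by omega
      rw [hm', hen] at hedge
      exact hedge
    have hdisj : ∀ u ∈ G.nbr S \ {d}, u ∉ S := fun u hu =>
      (Finset.mem_filter.mp (Finset.mem_sdiff.mp hu).1).2.1
    have hR := relax_le G h s S (G.nbr S \ {d}) hdisj m hm1 w qq hE' hX' hS' hws hterm hinj
    rw [hen] at hR
    refine le_trans (min_le_left _ _) (le_trans hR ?_)
    exact EReal.coe_le_coe_iff.mpr hfinal
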